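/- Let E be a real inner product space, λ ≥ 0, and let f : E → ℝ be a λ-concave function that is Fréchet differentiable at a point p. Let γ : [0, T] → E be a 1-Lipschitz curve with γ(0) = p and γ(T) = q ≠ p, possessing a right derivative γ⁺(0) at 0, and suppose the composition h = f ∘ γ is λ-concave on [0, T] (i.e. t ↦ h(t) − (λ/2)t² is concave) and has a left derivative h⁻(T) at T. Set ν = (q − p)/‖q − p‖ and assume ⟪∇f(p), ν⟫ ≥ 0. Then ⟪∇f(p), γ⁺(0)⟫ − ⟪∇f(p), ν⟫ ≤ h⁺(0) − h⁻(T) + λ·T, where h⁺(0) = ⟪∇f(p), γ⁺(0)⟫ is the right derivative of h at 0. -/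

import Mathlib

open scoped RealInnerProductSpace

/-- Linear model of Lemma A.6 (lem:angle-d): for a 1-Lipschitz curve `γ` from `p` to `q`
along which a λ-concave function `f` is λ-concave, with `ν` the direction from `p` to `q`
and `⟪∇f(p), ν⟫ ≥ 0`, one has
`⟪∇f(p), γ⁺(0)⟫ − ⟪∇f(p), ν⟫ ≤ h⁺(0) − h⁻(T) + λT` where `h = f ∘ γ`. -/
theorem angle_d_lemma
    {E : Type*} [NormedAddCommGroup E] [InnerProductSpace ℝ E]
    (lam : ℝ) (hlam : 0 ≤ lam) (f : E → ℝ)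
    (hconc : ConcaveOn ℝ Set.univ (fun x => f x - lam / 2 * ‖x‖ ^ 2))
    (p : E) (gp : E) (hgp : HasFDerivAt f (innerSL ℝ gp) p)
    (T : ℝ) (hT : 0 < T) (γ : ℝ → E)
    (hlip : LipschitzOnWith 1 γ (Set.Icc 0 T))
    (h0 : γ 0 = p) (q : E) (hq : γ T = q) (hne : q ≠ p)
    (ξ : E) (hξ : HasDerivWithinAt γ ξ (Set.Icc 0 T) 0)
    (hhconc : ConcaveOn ℝ (Set.Icc 0 T) (fun t => f (γ t) - lam / 2 * t ^ 2))
    (L : ℝ) (hL : HasDerivWithinAt (fun t => f (γ t)) L (Set.Icc 0 T) T)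
    (hnu : 0 ≤ ⟪gp, ‖q - p‖⁻¹ • (q - p)⟫) :
    ⟪gp, ξ⟫ - ⟪gp, ‖q - p‖⁻¹ • (q - p)⟫ ≤ ⟪gp, ξ⟫ - L + lam * T := by
  set v : E := q - p with hv
  set r : ℝ := ‖q - p‖ with hr
  have hr0 : 0 < r := by
    rw [hr, norm_pos_iff]
    exact sub_ne_zero.mpr hne
  -- r ≤ T from the Lipschitz bound
  have hrT : r ≤ T := by
    have h1 : dist (γ T) (γ 0) ≤ 1 * dist T (0 : ℝ) :=
      (lipschitzOnWith_iff_dist_le_mul.mp hlip) T (Set.right_mem_Icc.mpr hT.le) 0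
        (Set.left_mem_Icc.mpr hT.le)
    rw [hq, h0, dist_eq_norm, dist_eq_norm] at h1
    simpa [abs_of_pos hT] using h1
  -- J := ⟪gp, ν⟫, I := ⟪gp, v⟫
  set J : ℝ := ⟪gp, r⁻¹ • v⟫ with hJdef
  have hIJ : ⟪gp, v⟫ = r * J := by
    rw [hJdef, real_inner_smul_right]
    field_simp
  -- Step 1: L - lam*T ≤ slope of g := h - lam/2 t² from 0 to T
  have hderg : HasDerivWithinAt (fun t => f (γ t) - lam / 2 * t ^ 2) (L - lam * T)
      (Set.Icc 0 T) T := by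
    have hp : HasDerivWithinAt (fun t : ℝ => lam / 2 * t ^ 2) (lam * T) (Set.Icc 0 T) T := by
      have := ((hasDerivAt_pow 2 T).const_mul (lam / 2)).hasDerivWithinAt (s := Set.Icc 0 T)
      exact this.congr_deriv (by simp; ring)
    exact hL.sub hp
  have key1 : L - lam * T ≤ (f q - lam / 2 * T ^ 2 - f p) / T := by
    have := hhconc.le_slope_of_hasDerivWithinAt (Set.left_mem_Icc.mpr hT.le)
      (Set.right_mem_Icc.mpr hT.le) hT hderg
    rw [slope_def_field] at this
    simpa [h0, hq] using this
  have key1' : T * (L - lam * T) ≤ f q - lam / 2 * T ^ 2 - f p := by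
    rw [← le_div_iff₀' hT]
    exact key1
  -- Step 2: f q - f p ≤ ⟪gp, v⟫ + lam/2 * r²
  have key2 : f q - f p ≤ r * J + lam / 2 * r ^ 2 := by
    -- restrict the concave function to the segment
    set F : E → ℝ := fun x => f x - lam / 2 * ‖x‖ ^ 2 with hF
    have hφconc : ConcaveOn ℝ Set.univ (fun t : ℝ => F (p + t • v)) := by
      have h1 := hconc.comp_affineMap (AffineMap.lineMap p q : ℝ →ᵃ[ℝ] E)
      rw [Set.preimage_univ] at h1
      have heq : (F ∘ (AffineMap.lineMap p q : ℝ →ᵃ[ℝ] E)) = fun t : ℝ => F (p + t • v) := by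
        funext t
        simp only [Function.comp_apply, AffineMap.lineMap_apply, hv, vsub_eq_sub, vadd_eq_add]
        congr 1
        abel
      rwa [heq] at h1
    -- derivative of the restriction at 0
    have hline : HasDerivAt (fun t : ℝ => p + t • v) v 0 := by
      simpa using ((hasDerivAt_id (0:ℝ)).smul_const v).const_add p
    have hψ : HasDerivAt (fun t : ℝ => f (p + t • v)) ⟪gp, v⟫ 0 := by
      have hgp' : HasFDerivAt f (innerSL ℝ gp) ((fun t : ℝ => p + t • v) 0) := by
        simpa using hgp
      have := hgp'.comp_hasDerivAt 0 hline
      exact this.congr_deriv (by simp)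
    have hnorm : ∀ t : ℝ, ‖p + t • v‖ ^ 2 = ‖p‖ ^ 2 + 2 * t * ⟪p, v⟫ + t ^ 2 * ‖v‖ ^ 2 := by
      intro t
      rw [norm_add_sq_real, real_inner_smul_right, norm_smul]
      simp [mul_pow]
      ring
    have hpoly : HasDerivAt (fun t : ℝ => lam / 2 * ‖p + t • v‖ ^ 2) (lam * ⟪p, v⟫) 0 := by
      have h1 : HasDerivAt (fun t : ℝ => lam / 2 *
          (‖p‖ ^ 2 + 2 * t * ⟪p, v⟫ + t ^ 2 * ‖v‖ ^ 2)) (lam * ⟪p, v⟫) 0 := by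
        have ha : HasDerivAt (fun t : ℝ => ‖p‖ ^ 2 + 2 * t * ⟪p, v⟫ + t ^ 2 * ‖v‖ ^ 2)
            (2 * ⟪p, v⟫) 0 := by
          have hb : HasDerivAt (fun t : ℝ => 2 * t * ⟪p, v⟫) (2 * ⟪p, v⟫) 0 := by
            simpa using (((hasDerivAt_id (0:ℝ)).const_mul 2).mul_const ⟪p, v⟫)
          have hc : HasDerivAt (fun t : ℝ => t ^ 2 * ‖v‖ ^ 2) 0 0 := by
            simpa using ((hasDerivAt_pow 2 (0:ℝ)).mul_const (‖v‖ ^ 2))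
          exact ((hb.const_add (‖p‖ ^ 2)).add hc).congr_deriv (by simp)
        have := ha.const_mul (lam / 2)
        exact this.congr_deriv (by ring)
      have : (fun t : ℝ => lam / 2 * (‖p‖ ^ 2 + 2 * t * ⟪p, v⟫ + t ^ 2 * ‖v‖ ^ 2)) =
          fun t : ℝ => lam / 2 * ‖p + t • v‖ ^ 2 := by
        funext t; rw [hnorm t]
      rwa [this] at h1
    have hφder : HasDerivAt (fun t : ℝ => F (p + t • v)) (⟪gp, v⟫ - lam * ⟪p, v⟫) 0 :=
      hψ.sub hpoly
    have hslope := hφconc.slope_le_of_hasDerivAt (Set.mem_univ (0:ℝ)) (Set.mem_univ (1:ℝ))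
      one_pos hφder
    rw [slope_def_field] at hslope
    have hq' : p + (1 : ℝ) • v = q := by rw [one_smul, hv]; abel
    have h0' : p + (0 : ℝ) • v = p := by simp
    rw [hq', h0'] at hslope
    simp only [hF, div_one] at hslope
    have hqnorm : ‖q‖ ^ 2 = ‖p‖ ^ 2 + 2 * ⟪p, v⟫ + ‖v‖ ^ 2 := by
      have := hnorm 1
      rw [hq'] at this
      simpa using this
    rw [hqnorm] at hslope
    rw [hIJ] at hslope
    have : r ^ 2 = ‖v‖ ^ 2 := by rw [hr, hv]
    nlinarith [hslope]
  -- Combine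
  have hJ0 : 0 ≤ J := hnu
  have hmain : T * L ≤ T * (J + lam * T) := by
    nlinarith [mul_nonneg hJ0 (sub_nonneg.mpr hrT), mul_nonneg hlam
      (mul_nonneg (sub_nonneg.mpr hrT) (by linarith : (0:ℝ) ≤ T + r))]
  have : L ≤ J + lam * T := le_of_mul_le_mul_left hmain hT
  linarith
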